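/- Let n ≥ 1 and let Γ be a finite subgroup of the unitary group U_n(ℂ). Let G be a function analytic on a neighborhood N of 1 in ℂ with G(x) = (1 − x)^{2n}·M_Γ(x) for all x ∈ N with |x| < 1, and set γ_k = (−1)^k G^{(k)}(1)/k! for k ≥ 0. Then γ_3 − 2γ_4 + γ_5 = 0; explicitly, −G‴(1)/6 − G⁗(1)/12 − G^{(5)}(1)/120 = 0. -/

import Mathlib

open Filter Topology Finset Polynomial

noncomputable def detP {n : ℕ} (M : Matrix (Fin n) (Fin n) ℂ) : ℂ[X] :=
  Matrix.det ((1 : Matrix (Fin n) (Fin n) ℂ[X]) - Matrix.of fun i j => X * C (M i j))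

lemma detP_eval {n : ℕ} (M : Matrix (Fin n) (Fin n) ℂ) (x : ℂ) :
    (detP M).eval x = Matrix.det (1 - x • M) := by
  rw [detP]
  change (evalRingHom x) _ = _
  rw [RingHom.map_det]
  congr 1
  ext i j
  simp [RingHom.mapMatrix_apply, Matrix.map_apply, Matrix.sub_apply, Matrix.one_apply,
    Matrix.smul_apply, apply_ite (eval x)]
  ring

lemma poly_analytic (p : ℂ[X]) (s : Set ℂ) : AnalyticOnNhd ℂ (fun x => p.eval x) s := by
  intro x _
  have := (AnalyticOnNhd.eval_polynomial (𝕜 := ℂ) (A := ℂ) p) x (Set.mem_univ x)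
  simpa using this

lemma det_one_sub_inv_smul {n : ℕ} (A A' : Matrix (Fin n) (Fin n) ℂ) (hAA' : A * A' = 1)
    (x : ℂ) (hx : x ≠ 0) :
    Matrix.det (1 - x⁻¹ • A) = A.det * (-x⁻¹) ^ n * Matrix.det (1 - x • A') := by
  have h2 : A * ((1 : Matrix (Fin n) (Fin n) ℂ) - x • A')
      = A - x • (1 : Matrix (Fin n) (Fin n) ℂ) := by
    rw [Matrix.mul_sub, Matrix.mul_one, Matrix.mul_smul, hAA']
  have h1 : (1 : Matrix (Fin n) (Fin n) ℂ) - x⁻¹ • A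
      = A * ((-x⁻¹) • ((1 : Matrix (Fin n) (Fin n) ℂ) - x • A')) := by
    rw [Matrix.mul_smul, h2, smul_sub, smul_smul, neg_mul, inv_mul_cancel₀ hx]
    simp [neg_smul, sub_eq_add_neg]
    abel
  rw [h1, Matrix.det_mul, Matrix.det_smul, Fintype.card_fin]
  ring

lemma real_seq (a b : ℝ) (hab : a < b) (s : Set ℂ) (hs : s.Finite) :
    ∃ t : ℝ, t ∈ Set.Ioo a b ∧ (t : ℂ) ∉ s := by
  have h2 : (Set.Ioo a b \ (Complex.ofReal ⁻¹' s)).Infinite :=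
    (Set.Ioo_infinite hab).diff (hs.preimage Complex.ofReal_injective.injOn)
  obtain ⟨t, ht⟩ := h2.nonempty
  exact ⟨t, ht.1, fun hc => ht.2 hc⟩

set_option maxHeartbeats 2000000 in
/-- for a finite subgroup `Γ ≤ U_n(ℂ)` and `G` an analytic extension of
`(1-x)^{2n} M_Γ(x)` near `x = 1`, the Laurent coefficients `γ_k = (-1)^k G^{(k)}(1)/k!`
satisfy `γ₃ - 2γ₄ + γ₅ = 0`, i.e. `-G‴(1)/6 - G⁗(1)/12 - G⁽⁵⁾(1)/120 = 0`. -/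
theorem molien_series_real_invariants_higher_relation (n : ℕ) (hn : 1 ≤ n)
    (Γ : Subgroup (Matrix.unitaryGroup (Fin n) ℂ)) [Fintype Γ]
    (G : ℂ → ℂ) (N : Set ℂ) (hN : N ∈ 𝓝 (1 : ℂ)) (hG : AnalyticOnNhd ℂ G N)
    (hGeq : ∀ x ∈ N, ‖x‖ < 1 →
      G x = (1 - x) ^ (2 * n) *
        ((Fintype.card Γ : ℂ)⁻¹ * ∑ h : Γ,
          (Matrix.det (1 - x • ((h : Matrix.unitaryGroup (Fin n) ℂ) :
              Matrix (Fin n) (Fin n) ℂ)) *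
            Matrix.det (1 - x • (((h⁻¹ : Γ) : Matrix.unitaryGroup (Fin n) ℂ) :
              Matrix (Fin n) (Fin n) ℂ)))⁻¹)) :
    -(iteratedDeriv 3 G 1) / 6 - iteratedDeriv 4 G 1 / 12
        - iteratedDeriv 5 G 1 / 120 = 0 := by
  classical
  set m := 2 * n with hm
  set c : ℂ := (Fintype.card Γ : ℂ) with hcdef
  have hc : c ≠ 0 := by
    simp [hcdef, Fintype.card_ne_zero]
  set mat : Γ → Matrix (Fin n) (Fin n) ℂ :=
    fun h => ((h : Matrix.unitaryGroup (Fin n) ℂ) : Matrix (Fin n) (Fin n) ℂ) with hmatdef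
  have hmat : ∀ h : Γ, mat h * mat h⁻¹ = 1 := by
    intro h
    have : ((h : Matrix.unitaryGroup (Fin n) ℂ) * ((h⁻¹ : Γ) : Matrix.unitaryGroup (Fin n) ℂ))
        = 1 := by
      rw [← Subgroup.coe_mul, mul_inv_cancel, OneMemClass.coe_one]
    calc mat h * mat h⁻¹
        = (((h : Matrix.unitaryGroup (Fin n) ℂ) * ((h⁻¹ : Γ) : Matrix.unitaryGroup (Fin n) ℂ) :
            Matrix.unitaryGroup (Fin n) ℂ) : Matrix (Fin n) (Fin n) ℂ) := rfl
      _ = 1 := by rw [this]; rfl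
  have hmat' : ∀ h : Γ, mat h⁻¹ * mat h = 1 := by
    intro h
    have := hmat h⁻¹
    simpa using this
  set q : Γ → ℂ[X] := fun h => detP (mat h) * detP (mat h⁻¹) with hqdef
  have hqe : ∀ (h : Γ) (x : ℂ), (q h).eval x =
      Matrix.det (1 - x • mat h) * Matrix.det (1 - x • mat h⁻¹) := by
    intro h x; simp [hqdef, detP_eval]
  have hq0 : ∀ h : Γ, (q h).eval 0 = 1 := by intro h; simp [hqe]
  have hqinv : ∀ (h : Γ) (x : ℂ), x ≠ 0 → (q h).eval x⁻¹ = (x⁻¹) ^ m * (q h).eval x := by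
    intro h x hx
    rw [hqe, hqe, det_one_sub_inv_smul (mat h) (mat h⁻¹) (hmat h) x hx,
        det_one_sub_inv_smul (mat h⁻¹) (mat h) (hmat' h) x hx]
    have hdet : (mat h).det * (mat h⁻¹).det = 1 := by
      rw [← Matrix.det_mul, hmat h, Matrix.det_one]
    have hpow : (-x⁻¹) ^ n * (-x⁻¹) ^ n = (x⁻¹) ^ m := by
      rw [← pow_add, hm, show n + n = 2 * n from by ring]
      exact (Even.neg_pow (even_two_mul n) x⁻¹)
    calc (mat h).det * (-x⁻¹) ^ n * Matrix.det (1 - x • mat h⁻¹) *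
          ((mat h⁻¹).det * (-x⁻¹) ^ n * Matrix.det (1 - x • mat h))
        = ((mat h).det * (mat h⁻¹).det) * ((-x⁻¹) ^ n * (-x⁻¹) ^ n) *
          (Matrix.det (1 - x • mat h) * Matrix.det (1 - x • mat h⁻¹)) := by ring
      _ = (x⁻¹) ^ m * (Matrix.det (1 - x • mat h) * Matrix.det (1 - x • mat h⁻¹)) := by
          rw [hdet, hpow, one_mul]
  set B : ℂ[X] := ∏ h : Γ, q h with hBdef
  set Apoly : ℂ[X] := ∑ h : Γ, ∏ h' ∈ univ.erase h, q h' with hAdef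
  have hBev : ∀ x : ℂ, B.eval x = ∏ h : Γ, (q h).eval x := by
    intro x; rw [hBdef, eval_prod]
  have hBne : B ≠ 0 := by
    intro h0
    have h1 : B.eval 0 = 1 := by rw [hBev]; simp [hq0]
    rw [h0] at h1; simp at h1
  have hS : {x : ℂ | B.IsRoot x}.Finite := Polynomial.finite_setOf_isRoot hBne
  have hqne : ∀ (x : ℂ), B.eval x ≠ 0 → ∀ h : Γ, (q h).eval x ≠ 0 := by
    intro x hx h h0
    exact hx (by rw [hBev]; exact Finset.prod_eq_zero (mem_univ h) h0)
  have hBA : ∀ x : ℂ, B.eval x ≠ 0 → B.eval x * ∑ h : Γ, ((q h).eval x)⁻¹ = Apoly.eval x := by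
    intro x hx
    rw [Finset.mul_sum, hAdef, eval_finset_sum]
    refine Finset.sum_congr rfl fun h _ => ?_
    rw [eval_prod, eval_prod,
      ← Finset.mul_prod_erase univ (fun h' => (q h').eval x) (mem_univ h),
      mul_comm ((q h).eval x), mul_assoc, mul_inv_cancel₀ (hqne x hx h), mul_one]
  -- geometry
  obtain ⟨ε, hε0, hεN⟩ := Metric.mem_nhds_iff.mp hN
  set r : ℝ := min ε 1 / 4 with hrdef
  have hr0 : 0 < r := by
    have := lt_min hε0 one_pos
    positivity
  have hrε : 4 * r ≤ ε := by
    rw [hrdef]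
    have : min ε 1 ≤ ε := min_le_left _ _
    linarith
  have hr1 : 4 * r ≤ 1 := by
    rw [hrdef]
    have : min ε 1 ≤ 1 := min_le_right _ _
    linarith
  set W := Metric.ball (1:ℂ) r with hWdef
  have hWopen : IsOpen W := Metric.isOpen_ball
  have h1W : (1:ℂ) ∈ W := Metric.mem_ball_self hr0
  have hWpre : IsPreconnected W := (convex_ball (1:ℂ) r).isPreconnected
  have hWN : W ⊆ N := by
    intro x hx
    refine hεN ?_
    rw [Metric.mem_ball] at hx ⊢
    have : r < ε := by linarith
    linarith
  have hnorm_big : ∀ x : ℂ, ‖x - 1‖ < 2 * r → 1/2 < ‖x‖ := by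
    intro x hx
    have h1 : (1:ℝ) ≤ ‖x‖ + ‖x - 1‖ := by simpa using norm_sub_le x (x - 1)
    have : 2 * r ≤ 1/2 := by linarith
    linarith
  have hx0 : ∀ x : ℂ, ‖x - 1‖ < 2 * r → x ≠ 0 := by
    intro x hx h0
    have := hnorm_big x hx
    rw [h0] at this
    simp at this
    linarith
  have hinv_norm : ∀ x : ℂ, ‖x - 1‖ < 2 * r → ‖x⁻¹ - 1‖ ≤ 2 * ‖x - 1‖ := by
    intro x hx
    have hx0' := hx0 x hx
    have hb := hnorm_big x hx
    have h1 : x⁻¹ - 1 = x⁻¹ * (1 - x) := by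
      field_simp
    rw [h1, norm_mul, norm_inv, norm_sub_rev]
    have h2 : ‖x‖⁻¹ ≤ 2 := by
      rw [inv_le_comm₀ (by linarith) (by norm_num)]
      linarith
    have h3 : (0:ℝ) ≤ ‖x - 1‖ := norm_nonneg _
    nlinarith
  have hm_even : Even m := by rw [hm]; exact even_two_mul n
  have h2rε : 2 * r < ε := by linarith
  have hGeq' : ∀ x ∈ N, ‖x‖ < 1 →
      G x = (1 - x) ^ m * (c⁻¹ * ∑ h : Γ, ((q h).eval x)⁻¹) := by
    intro x hx h1
    rw [hGeq x hx h1]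
    simp only [hqe]
    rfl
  have hGan : AnalyticOnNhd ℂ G W := fun x hx => hG x (hWN hx)
  have hFan : AnalyticOnNhd ℂ (fun x => G x⁻¹) W := by
    intro x hx
    have hx2r : ‖x - 1‖ < 2 * r := by
      rw [hWdef, Metric.mem_ball, dist_eq_norm] at hx
      linarith
    have hx0' : x ≠ 0 := hx0 x hx2r
    have hxi : x⁻¹ ∈ N := by
      apply hεN
      rw [Metric.mem_ball, dist_eq_norm]
      have h1 := hinv_norm x hx2r
      have h2 : ‖x - 1‖ < r := by
        rw [hWdef, Metric.mem_ball, dist_eq_norm] at hx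
        linarith
      linarith
    exact (hG x⁻¹ hxi).comp (analyticAt_inv hx0')
  have hΦan : AnalyticOnNhd ℂ (fun x => c * G x * B.eval x - (1 - x) ^ m * Apoly.eval x) W :=
    ((analyticOnNhd_const.mul hGan).mul (poly_analytic B W)).sub
      (((analyticOnNhd_const.sub analyticOnNhd_id).pow m).mul (poly_analytic Apoly W))
  have hΨan : AnalyticOnNhd ℂ
      (fun x => c * G x⁻¹ * B.eval x - (1 - x) ^ m * Apoly.eval x) W :=
    ((analyticOnNhd_const.mul hFan).mul (poly_analytic B W)).sub
      (((analyticOnNhd_const.sub analyticOnNhd_id).pow m).mul (poly_analytic Apoly W))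
  have hfreqΦ : ∃ᶠ z in 𝓝[≠] (1:ℂ),
      c * G z * B.eval z - (1 - z) ^ m * Apoly.eval z = 0 := by
    rw [Filter.frequently_iff]
    intro U hU
    rw [Metric.mem_nhdsWithin_iff] at hU
    obtain ⟨ε', hε'0, hε'⟩ := hU
    set δ := min ε' (2 * r) with hδdef
    have hδ0 : 0 < δ := lt_min hε'0 (by linarith)
    have ha : max (1 - δ) (1/2) < 1 := by
      apply max_lt
      · linarith
      · norm_num
    obtain ⟨t, ⟨ht1, ht2⟩, htS⟩ := real_seq _ 1 ha {x : ℂ | B.IsRoot x} hS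
    have ht1a : 1 - δ < t := lt_of_le_of_lt (le_max_left _ _) ht1
    have ht1b : 1/2 < t := lt_of_le_of_lt (le_max_right _ _) ht1
    have hδε' : δ ≤ ε' := min_le_left _ _
    have hδ2r : δ ≤ 2 * r := min_le_right _ _
    have hnt : ‖(t:ℂ) - 1‖ = 1 - t := by
      rw [← Complex.ofReal_one, ← Complex.ofReal_sub, Complex.norm_real, Real.norm_eq_abs,
        abs_of_nonpos (by linarith)]
      ring
    have htN : (t:ℂ) ∈ N := by
      apply hεN
      rw [Metric.mem_ball, dist_eq_norm, hnt]
      linarith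
    have htnorm : ‖(t:ℂ)‖ < 1 := by
      rw [Complex.norm_real, Real.norm_eq_abs, abs_of_pos (by linarith)]
      linarith
    have hBt : B.eval (t:ℂ) ≠ 0 := fun h0 => htS h0
    refine ⟨(t:ℂ), hε' ⟨?_, ?_⟩, ?_⟩
    · rw [Metric.mem_ball, dist_eq_norm, hnt]
      linarith
    · simp only [Set.mem_compl_iff, Set.mem_singleton_iff]
      intro hc1
      have : t = 1 := by exact_mod_cast hc1
      linarith
    · rw [hGeq' (t:ℂ) htN htnorm]
      linear_combination ((1 - (t:ℂ))^m * c * c⁻¹) * hBA (t:ℂ) hBt +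
        ((1 - (t:ℂ))^m * Apoly.eval (t:ℂ)) * mul_inv_cancel₀ hc
  have hfreqΨ : ∃ᶠ z in 𝓝[≠] (1:ℂ),
      c * G z⁻¹ * B.eval z - (1 - z) ^ m * Apoly.eval z = 0 := by
    rw [Filter.frequently_iff]
    intro U hU
    rw [Metric.mem_nhdsWithin_iff] at hU
    obtain ⟨ε', hε'0, hε'⟩ := hU
    set δ := min ε' (2 * r) with hδdef
    have hδ0 : 0 < δ := lt_min hε'0 (by linarith)
    obtain ⟨t, ⟨ht1, ht2⟩, htS⟩ := real_seq 1 (1 + δ) (by linarith) {x : ℂ | B.IsRoot x} hS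
    have hδε' : δ ≤ ε' := min_le_left _ _
    have hδ2r : δ ≤ 2 * r := min_le_right _ _
    have hnt : ‖(t:ℂ) - 1‖ = t - 1 := by
      rw [← Complex.ofReal_one, ← Complex.ofReal_sub, Complex.norm_real, Real.norm_eq_abs,
        abs_of_nonneg (by linarith)]
    have ht2r : ‖(t:ℂ) - 1‖ < 2 * r := by rw [hnt]; linarith
    have hx0' : (t:ℂ) ≠ 0 := hx0 _ ht2r
    have htiN : ((t:ℂ))⁻¹ ∈ N := by
      apply hεN
      rw [Metric.mem_ball, dist_eq_norm]
      have h1 := hinv_norm _ ht2r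
      rw [hnt] at h1
      linarith
    have htinorm : ‖((t:ℂ))⁻¹‖ < 1 := by
      rw [norm_inv, Complex.norm_real, Real.norm_eq_abs, abs_of_pos (by linarith)]
      rw [inv_lt_one₀ (by linarith)]
      linarith
    have hBt : B.eval (t:ℂ) ≠ 0 := fun h0 => htS h0
    refine ⟨(t:ℂ), hε' ⟨?_, ?_⟩, ?_⟩
    · rw [Metric.mem_ball, dist_eq_norm, hnt]
      linarith
    · simp only [Set.mem_compl_iff, Set.mem_singleton_iff]
      intro hc1
      have : t = 1 := by exact_mod_cast hc1
      linarith
    · have hGt := hGeq' ((t:ℂ))⁻¹ htiN htinorm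
      have hterm : ∀ h : Γ, ((q h).eval ((t:ℂ))⁻¹)⁻¹ = (t:ℂ)^m * ((q h).eval (t:ℂ))⁻¹ := by
        intro h
        rw [hqinv h _ hx0', mul_inv, inv_pow, inv_inv]
      have hsum : ∑ h : Γ, ((q h).eval ((t:ℂ))⁻¹)⁻¹
          = (t:ℂ)^m * ∑ h : Γ, ((q h).eval (t:ℂ))⁻¹ := by
        rw [Finset.mul_sum]
        exact Finset.sum_congr rfl fun h _ => hterm h
      have h1x : (1 - ((t:ℂ))⁻¹)^m = (((t:ℂ))⁻¹)^m * (1 - (t:ℂ))^m := by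
        have he : (1 : ℂ) - ((t:ℂ))⁻¹ = -(((t:ℂ))⁻¹ * (1 - (t:ℂ))) := by
          field_simp
          ring
        rw [he, hm_even.neg_pow, mul_pow]
      have hxm : (((t:ℂ))⁻¹)^m * (t:ℂ)^m = 1 := by
        rw [← mul_pow, inv_mul_cancel₀ hx0', one_pow]
      have hGx : G ((t:ℂ))⁻¹ = (1 - (t:ℂ))^m * (c⁻¹ * ∑ h : Γ, ((q h).eval (t:ℂ))⁻¹) := by
        rw [hGt, hsum, h1x]
        linear_combination ((1 - (t:ℂ))^m * c⁻¹ * ∑ h : Γ, ((q h).eval (t:ℂ))⁻¹) * hxm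
      rw [hGx]
      linear_combination ((1 - (t:ℂ))^m * c * c⁻¹) * hBA (t:ℂ) hBt +
        ((1 - (t:ℂ))^m * Apoly.eval (t:ℂ)) * mul_inv_cancel₀ hc
  have hΦ0 := hΦan.eqOn_zero_of_preconnected_of_frequently_eq_zero hWpre h1W hfreqΦ
  have hΨ0 := hΨan.eqOn_zero_of_preconnected_of_frequently_eq_zero hWpre h1W hfreqΨ
  have hGFW : ∀ x ∈ W, B.eval x ≠ 0 → G x = G x⁻¹ := by
    intro x hxW hBx
    have h1 := hΦ0 hxW
    have h2 := hΨ0 hxW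
    simp only [Pi.zero_apply] at h1 h2
    have h3 : c * G x * B.eval x = c * G x⁻¹ * B.eval x := by
      linear_combination h1 - h2
    have h4 : c * G x = c * G x⁻¹ := mul_right_cancel₀ hBx h3
    exact mul_left_cancel₀ hc h4
  have hfreq3 : ∃ᶠ z in 𝓝[≠] (1:ℂ), G z = (fun x => G x⁻¹) z := by
    rw [Filter.frequently_iff]
    intro U hU
    rw [Metric.mem_nhdsWithin_iff] at hU
    obtain ⟨ε', hε'0, hε'⟩ := hU
    set δ := min ε' r with hδdef
    have hδ0 : 0 < δ := lt_min hε'0 hr0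
    have ha : max (1 - δ) (1/2) < 1 := by
      apply max_lt
      · linarith
      · norm_num
    obtain ⟨t, ⟨ht1, ht2⟩, htS⟩ := real_seq _ 1 ha {x : ℂ | B.IsRoot x} hS
    have ht1a : 1 - δ < t := lt_of_le_of_lt (le_max_left _ _) ht1
    have hδε' : δ ≤ ε' := min_le_left _ _
    have hδr : δ ≤ r := min_le_right _ _
    have hnt : ‖(t:ℂ) - 1‖ = 1 - t := by
      rw [← Complex.ofReal_one, ← Complex.ofReal_sub, Complex.norm_real, Real.norm_eq_abs,
        abs_of_nonpos (by linarith)]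
      ring
    have htW : (t:ℂ) ∈ W := by
      rw [hWdef, Metric.mem_ball, dist_eq_norm, hnt]
      linarith
    refine ⟨(t:ℂ), hε' ⟨?_, ?_⟩, ?_⟩
    · rw [Metric.mem_ball, dist_eq_norm, hnt]
      linarith
    · simp only [Set.mem_compl_iff, Set.mem_singleton_iff]
      intro hc1
      have : t = 1 := by exact_mod_cast hc1
      linarith
    · exact hGFW (t:ℂ) htW (fun h0 => htS h0)
  have hEqGF : Set.EqOn G (fun x => G x⁻¹) W :=
    hGan.eqOn_of_preconnected_of_frequently_eq hFan hWpre h1W hfreq3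
  have hev : G =ᶠ[𝓝 (1:ℂ)] (fun x => G x⁻¹) :=
    hEqGF.eventuallyEq_of_mem (hWopen.mem_nhds h1W)
  -- clean up context
  clear hGeq hGeq' hΦan hΨan hfreqΦ hfreqΨ hΦ0 hΨ0 hGFW hfreq3 hEqGF hFan hBA hqne hS
  clear hBne hBev hq0 hqinv hqe hAdef hBdef hqdef hmat hmat' hmatdef hcdef hc hεN hN hG hn
  clear hm_even hrε h2rε
  clear_value B Apoly q mat c m
  clear B Apoly q mat c hm m
  clear_value r W
  clear hrdef hε0 ε
  -- Phase 2 : derivative computations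
  set d : ℕ → ℂ → ℂ := fun j => deriv^[j] G with hddef
  have hdsucc : ∀ j, d (j+1) = deriv (d j) := by
    intro j
    funext y
    rw [hddef]
    simp [Function.iterate_succ_apply']
  have hdan : ∀ j, AnalyticOnNhd ℂ (d j) W := by
    intro j
    induction j with
    | zero => exact hGan
    | succ k ih =>
        rw [hdsucc k]
        exact ih.deriv
  have hdd : ∀ j, ∀ x ∈ W, HasDerivAt (d j) (d (j+1) x) x := by
    intro j x hx
    rw [hdsucc j]
    exact ((hdan j x hx).differentiableAt).hasDerivAt
  set W2 := Metric.ball (1:ℂ) (r/2) with hW2def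
  have hW2open : IsOpen W2 := Metric.isOpen_ball
  have h1W2 : (1:ℂ) ∈ W2 := Metric.mem_ball_self (by linarith)
  have hW2inv : ∀ x ∈ W2, x⁻¹ ∈ W := by
    intro x hx
    rw [hW2def, Metric.mem_ball, dist_eq_norm] at hx
    have h2 : ‖x - 1‖ < 2*r := by linarith
    have := hinv_norm x h2
    rw [hWdef, Metric.mem_ball, dist_eq_norm]
    linarith
  have hW2x0 : ∀ x ∈ W2, x ≠ 0 := by
    intro x hx
    apply hx0
    rw [hW2def, Metric.mem_ball, dist_eq_norm] at hx
    linarith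
  have hterm : ∀ (a : ℂ) (k j : ℕ), ∀ x ∈ W2, HasDerivAt
      (fun y : ℂ => a * (y⁻¹)^(k+1) * d j y⁻¹)
      (-(((k:ℂ)+1) * a) * (x⁻¹)^(k+2) * d j x⁻¹ - a * (x⁻¹)^(k+3) * d (j+1) x⁻¹) x := by
    intro a k j x hx
    have hx0' := hW2x0 x hx
    have hxiW := hW2inv x hx
    have h1 : HasDerivAt (fun y : ℂ => y⁻¹) (-(x^2)⁻¹) x := hasDerivAt_inv hx0'
    have h2 : HasDerivAt (fun y : ℂ => (y⁻¹)^(k+1))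
        ((((k:ℂ))+1) * (x⁻¹)^k * (-(x^2)⁻¹)) x := by
      have h2' := h1.fun_pow (k+1)
      simpa using h2'
    have h3 : HasDerivAt (fun y : ℂ => d j y⁻¹) (d (j+1) x⁻¹ * (-(x^2)⁻¹)) x :=
      (hdd j x⁻¹ hxiW).comp x h1
    have h4 := (h2.const_mul a).mul h3
    refine h4.congr_deriv ?_
    have hinv2 : (x^2)⁻¹ = (x⁻¹)^2 := (inv_pow x 2).symm
    rw [hinv2]
    ring
  have hF01 : ∀ x ∈ W2, HasDerivAt (fun y : ℂ => G y⁻¹)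
      ((-1 : ℂ) * (x⁻¹)^2 * d 1 x⁻¹) x := by
    intro x hx
    have hx0' := hW2x0 x hx
    have hxiW := hW2inv x hx
    have h1 : HasDerivAt (fun y : ℂ => y⁻¹) (-(x^2)⁻¹) x := hasDerivAt_inv hx0'
    have h0 : HasDerivAt G (d 1 x⁻¹) x⁻¹ := by
      have := hdd 0 x⁻¹ hxiW
      simpa [hddef] using this
    have h2 := h0.comp x h1
    refine h2.congr_deriv ?_
    have hinv2 : (x^2)⁻¹ = (x⁻¹)^2 := (inv_pow x 2).symm
    rw [hinv2]
    ring
  have hstep : ∀ (Fk Fk1 : ℂ → ℂ) (k : ℕ),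
      Set.EqOn (iteratedDeriv k (fun y : ℂ => G y⁻¹)) Fk W2 →
      (∀ x ∈ W2, HasDerivAt Fk (Fk1 x) x) →
      Set.EqOn (iteratedDeriv (k+1) (fun y : ℂ => G y⁻¹)) Fk1 W2 := by
    intro Fk Fk1 k hk hD x hx
    have h1 : iteratedDeriv k (fun y : ℂ => G y⁻¹) =ᶠ[𝓝 x] Fk :=
      hk.eventuallyEq_of_mem (hW2open.mem_nhds hx)
    calc iteratedDeriv (k+1) (fun y : ℂ => G y⁻¹) x
        = deriv (iteratedDeriv k (fun y : ℂ => G y⁻¹)) x := by rw [iteratedDeriv_succ]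
      _ = deriv Fk x := h1.deriv_eq
      _ = Fk1 x := (hD x hx).deriv
  have hiter1 : Set.EqOn (iteratedDeriv 1 (fun y : ℂ => G y⁻¹))
      (fun x : ℂ => (-1 : ℂ) * (x⁻¹)^2 * d 1 x⁻¹) W2 := by
    have h0 : Set.EqOn (iteratedDeriv 0 (fun y : ℂ => G y⁻¹)) (fun y : ℂ => G y⁻¹) W2 := by
      intro x _
      rw [iteratedDeriv_zero]
    exact hstep _ _ 0 h0 hF01
  have hF12 : ∀ x ∈ W2, HasDerivAt (fun x : ℂ => (-1 : ℂ) * (x⁻¹)^2 * d 1 x⁻¹)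
      ((2 : ℂ) * (x⁻¹)^3 * d 1 x⁻¹ + (1 : ℂ) * (x⁻¹)^4 * d 2 x⁻¹) x := by
    intro x hx
    convert hterm (-1) 1 1 x hx using 1
    push_cast
    ring
  have hiter2 := hstep _ _ 1 hiter1 hF12
  have hF23 : ∀ x ∈ W2, HasDerivAt
      (fun x : ℂ => (2 : ℂ) * (x⁻¹)^3 * d 1 x⁻¹ + (1 : ℂ) * (x⁻¹)^4 * d 2 x⁻¹)
      ((-6 : ℂ) * (x⁻¹)^4 * d 1 x⁻¹ + (-6 : ℂ) * (x⁻¹)^5 * d 2 x⁻¹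
        + (-1 : ℂ) * (x⁻¹)^6 * d 3 x⁻¹) x := by
    intro x hx
    refine ((hterm 2 2 1 x hx).add (hterm 1 3 2 x hx)).congr_deriv ?_
    push_cast
    ring
  have hiter3 := hstep _ _ 2 hiter2 hF23
  have hF34 : ∀ x ∈ W2, HasDerivAt
      (fun x : ℂ => (-6 : ℂ) * (x⁻¹)^4 * d 1 x⁻¹ + (-6 : ℂ) * (x⁻¹)^5 * d 2 x⁻¹
        + (-1 : ℂ) * (x⁻¹)^6 * d 3 x⁻¹)
      ((24 : ℂ) * (x⁻¹)^5 * d 1 x⁻¹ + (36 : ℂ) * (x⁻¹)^6 * d 2 x⁻¹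
        + (12 : ℂ) * (x⁻¹)^7 * d 3 x⁻¹ + (1 : ℂ) * (x⁻¹)^8 * d 4 x⁻¹) x := by
    intro x hx
    refine (((hterm (-6) 3 1 x hx).add (hterm (-6) 4 2 x hx)).add (hterm (-1) 5 3 x hx)).congr_deriv ?_
    push_cast
    ring
  have hiter4 := hstep _ _ 3 hiter3 hF34
  have hF45 : ∀ x ∈ W2, HasDerivAt
      (fun x : ℂ => (24 : ℂ) * (x⁻¹)^5 * d 1 x⁻¹ + (36 : ℂ) * (x⁻¹)^6 * d 2 x⁻¹
        + (12 : ℂ) * (x⁻¹)^7 * d 3 x⁻¹ + (1 : ℂ) * (x⁻¹)^8 * d 4 x⁻¹)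
      ((-120 : ℂ) * (x⁻¹)^6 * d 1 x⁻¹ + (-240 : ℂ) * (x⁻¹)^7 * d 2 x⁻¹
        + (-120 : ℂ) * (x⁻¹)^8 * d 3 x⁻¹ + (-20 : ℂ) * (x⁻¹)^9 * d 4 x⁻¹
        + (-1 : ℂ) * (x⁻¹)^10 * d 5 x⁻¹) x := by
    intro x hx
    refine ((((hterm 24 4 1 x hx).add (hterm 36 5 2 x hx)).add
      (hterm 12 6 3 x hx)).add (hterm 1 7 4 x hx)).congr_deriv ?_
    push_cast
    ring
  have hiter5 := hstep _ _ 4 hiter4 hF45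
  -- evaluate at 1
  have hd1 : ∀ j, d j 1 = iteratedDeriv j G 1 := by
    intro j
    rw [hddef, iteratedDeriv_eq_iterate]
  have hIG : ∀ k : ℕ, iteratedDeriv k G 1 = iteratedDeriv k (fun y : ℂ => G y⁻¹) 1 :=
    fun k => Filter.EventuallyEq.iteratedDeriv_eq k hev
  have E1 : iteratedDeriv 1 G 1 = -(iteratedDeriv 1 G 1) := by
    have h := (hIG 1).trans (hiter1 h1W2)
    simpa [hd1] using h
  have E3 : iteratedDeriv 3 G 1 =
      -6 * iteratedDeriv 1 G 1 + -6 * iteratedDeriv 2 G 1 + -(iteratedDeriv 3 G 1) := by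
    have h := (hIG 3).trans (hiter3 h1W2)
    simpa [hd1] using h
  have E5 : iteratedDeriv 5 G 1 =
      -120 * iteratedDeriv 1 G 1 + -240 * iteratedDeriv 2 G 1 + -120 * iteratedDeriv 3 G 1
        + -20 * iteratedDeriv 4 G 1 + -(iteratedDeriv 5 G 1) := by
    have h := (hIG 5).trans (hiter5 h1W2)
    simpa [hd1] using h
  linear_combination (-1/4 : ℂ) * E1 + (1/6 : ℂ) * E3 + (-1/240 : ℂ) * E5
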